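/- Let {K_1, ..., K_d} be a well separated family of convex bodies in R^d, and suppose H(v_1 ≤ t_1) and H(v_2 ≤ t_2) are two distinct positive transversal halfspaces with non-parallel bounding hyperplanes. Define M = H(v_1 ≤ t_1) ∩ H(v_2 ≤ t_2) and N = H(v_1 ≥ t_1) ∩ H(v_2 ≥ t_2), and let I = {i : M ∩ int K_i ≠ ∅}, J = {j : M ∩ int K_j = ∅}. Then the sets K'_i = M ∩ K_i (i ∈ I) and K'_j = N ∩ K_j (j ∈ J) are all nonempty, and the family {K'_1, ..., K'_d} is well separated. -/

import Mathlib

open Set MeasureTheory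

/-- The `(d+1) × (d+1)` matrix whose columns are `(v, 0), (a 0, 1), …, (a (d-1), 1)`. -/
noncomputable def liftedMat (d : ℕ) (v : EuclideanSpace ℝ (Fin d))
    (a : Fin d → EuclideanSpace ℝ (Fin d)) : Matrix (Fin (d + 1)) (Fin (d + 1)) ℝ :=
  Matrix.of fun i j =>
    Fin.lastCases (Fin.cases (0 : ℝ) (fun _ => (1 : ℝ)) j)
      (fun i' => Fin.cases (v i') (fun j' => a j' i') j) i

/-- The family `K` is well separated. -/
def WellSeparated (d : ℕ) {n : ℕ} (K : Fin n → Set (EuclideanSpace ℝ (Fin d))) : Prop :=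
  ∀ s : Finset (Fin n), s.card ≤ d + 1 →
    ∀ x : Fin n → EuclideanSpace ℝ (Fin d),
      (∀ i ∈ s, x i ∈ convexHull ℝ (K i)) →
      AffineIndependent ℝ (fun i : s => x i)

/-- `H(v ≤ t)` is a positive transversal halfspace to the family `K`: `v` is a unit
vector, the bounding hyperplane `H(v = t)` meets every `K i`, and for points
`a i ∈ K i ∩ H(v = t)` the simplex `v + a 0, a 0, …, a (d-1)` is positively oriented. -/
noncomputable def PosTransversal (d : ℕ) (K : Fin d → Set (EuclideanSpace ℝ (Fin d)))
    (v : EuclideanSpace ℝ (Fin d)) (t : ℝ) : Prop :=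
  ‖v‖ = 1 ∧ ∃ a : Fin d → EuclideanSpace ℝ (Fin d),
    (∀ i, a i ∈ K i ∧ (inner ℝ (a i) v : ℝ) = t) ∧ 0 < (liftedMat d v a).det

open scoped Classical in
theorem stmt19 (d : ℕ) (K : Fin d → Set (EuclideanSpace ℝ (Fin d)))
    (hbody : ∀ i, IsCompact (K i) ∧ Convex ℝ (K i) ∧ (interior (K i)).Nonempty)
    (hws : WellSeparated d K)
    (v₁ v₂ : EuclideanSpace ℝ (Fin d)) (t₁ t₂ : ℝ)
    (h₁ : PosTransversal d K v₁ t₁) (h₂ : PosTransversal d K v₂ t₂)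
    (hdist : (v₁, t₁) ≠ (v₂, t₂)) (hpar : v₁ ≠ v₂ ∧ v₁ ≠ -v₂)
    -- `M` and `N` are the two "wedges" determined by the two halfspaces:
    (M N : Set (EuclideanSpace ℝ (Fin d)))
    (hM : M = {x | (inner ℝ x v₁ : ℝ) ≤ t₁} ∩ {x | (inner ℝ x v₂ : ℝ) ≤ t₂})
    (hN : N = {x | t₁ ≤ (inner ℝ x v₁ : ℝ)} ∩ {x | t₂ ≤ (inner ℝ x v₂ : ℝ)})
    -- `K' i` is `M ∩ K i` when `M` meets the interior of `K i`, and `N ∩ K i` otherwise: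
    (K' : Fin d → Set (EuclideanSpace ℝ (Fin d)))
    (hK' : ∀ i, K' i = if (M ∩ interior (K i)).Nonempty then M ∩ K i else N ∩ K i) :
    (∀ i, (K' i).Nonempty) ∧ WellSeparated d K' := by
  obtain ⟨-, a, ha, -⟩ := h₁
  obtain ⟨-, b, hb, -⟩ := h₂
  constructor
  · intro i
    rw [hK' i]
    split_ifs with h
    · obtain ⟨x, hxM, hxK⟩ := h
      exact ⟨x, hxM, interior_subset hxK⟩
    · by_cases h1 : t₂ ≤ (inner ℝ (a i) v₂ : ℝ)
      · exact ⟨a i, by rw [hN]; exact ⟨le_of_eq (ha i).2.symm, h1⟩, (ha i).1⟩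
      by_cases h2 : t₁ ≤ (inner ℝ (b i) v₁ : ℝ)
      · exact ⟨b i, by rw [hN]; exact ⟨h2, le_of_eq (hb i).2.symm⟩, (hb i).1⟩
      exfalso
      push_neg at h1 h2
      set c := (1/2 : ℝ) • a i + (1/2 : ℝ) • b i with hc
      have hcK : c ∈ K i :=
        (hbody i).2.1 (ha i).1 (hb i).1 (by norm_num) (by norm_num) (by norm_num)
      have hc1 : (inner ℝ c v₁ : ℝ) < t₁ := by
        have := (ha i).2
        rw [hc, inner_add_left, real_inner_smul_left, real_inner_smul_left]
        linarith
      have hc2 : (inner ℝ c v₂ : ℝ) < t₂ := by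
        have := (hb i).2
        rw [hc, inner_add_left, real_inner_smul_left, real_inner_smul_left]
        linarith
      have hU : IsOpen {x : EuclideanSpace ℝ (Fin d) |
          (inner ℝ x v₁ : ℝ) < t₁ ∧ (inner ℝ x v₂ : ℝ) < t₂} := by
        have o1 : IsOpen {x : EuclideanSpace ℝ (Fin d) | (inner ℝ x v₁ : ℝ) < t₁} :=
          isOpen_lt (continuous_id.inner continuous_const) continuous_const
        have o2 : IsOpen {x : EuclideanSpace ℝ (Fin d) | (inner ℝ x v₂ : ℝ) < t₂} :=
          isOpen_lt (continuous_id.inner continuous_const) continuous_const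
        exact o1.inter o2
      obtain ⟨y, hy⟩ := (hbody i).2.2
      set f : ℝ → EuclideanSpace ℝ (Fin d) := fun l => l • y + (1 - l) • c with hf
      have hfc : Continuous f := by
        apply Continuous.add
        · exact continuous_id.smul continuous_const
        · exact (continuous_const.sub continuous_id).smul continuous_const
      have hf0 : f 0 ∈ {x : EuclideanSpace ℝ (Fin d) |
          (inner ℝ x v₁ : ℝ) < t₁ ∧ (inner ℝ x v₂ : ℝ) < t₂} := by
        simp only [hf, zero_smul, sub_zero, one_smul, zero_add]
        exact ⟨hc1, hc2⟩
      have hnh : f ⁻¹' {x : EuclideanSpace ℝ (Fin d) |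
          (inner ℝ x v₁ : ℝ) < t₁ ∧ (inner ℝ x v₂ : ℝ) < t₂} ∈ nhds (0 : ℝ) :=
        hfc.continuousAt.preimage_mem_nhds (hU.mem_nhds hf0)
      obtain ⟨δ, hδ, hball⟩ := Metric.mem_nhds_iff.mp hnh
      set l : ℝ := min (δ / 2) (1 / 2) with hl
      have hl0 : 0 < l := lt_min (by linarith) (by norm_num)
      have hl1 : l ≤ 1 / 2 := min_le_right _ _
      have hmem : f l ∈ {x : EuclideanSpace ℝ (Fin d) |
          (inner ℝ x v₁ : ℝ) < t₁ ∧ (inner ℝ x v₂ : ℝ) < t₂} := by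
        apply hball
        simp only [Metric.mem_ball, Real.dist_eq, sub_zero, abs_of_pos hl0]
        calc l ≤ δ / 2 := min_le_left _ _
          _ < δ := by linarith
      have hint : f l ∈ interior (K i) :=
        (hbody i).2.1.combo_interior_self_mem_interior hy hcK hl0 (by linarith) (by ring)
      exact h ⟨f l, by rw [hM]; exact ⟨hmem.1.le, hmem.2.le⟩, hint⟩
  · intro s hs x hx
    refine hws s hs x fun i hi => ?_
    have hsub : K' i ⊆ K i := by
      rw [hK' i]; split_ifs <;> exact inter_subset_right
    exact convexHull_mono hsub (hx i hi)
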